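/- Adjoint (integration-by-parts) identity underlying the nonlocal governing equations: let K : ℝ × ℝ → ℝ be continuous, l⁻, l⁺ > 0, c⁻, c⁺ ∈ ℝ, let σ : ℝ → ℝ be continuous and bounded, and let v : ℝ → ℝ be continuously differentiable with compact support. Define D̄v(x) = c⁻ ∫_{x−l⁻}^{x} K(x,t) v′(t) dt + c⁺ ∫_{x}^{x+l⁺} K(x,t) v′(t) dt and Ĩσ(x) = c⁻ ∫_{x}^{x+l⁻} K(s,x) σ(s) ds + c⁺ ∫_{x−l⁺}^{x} K(s,x) σ(s) ds. If Ĩσ is continuously differentiable, then ∫_ℝ σ(x) (D̄v)(x) dx = ∫_ℝ (Ĩσ)(x) v′(x) dx = − ∫_ℝ (d/dx Ĩσ)(x) v(x) dx. -/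

import Mathlib

open MeasureTheory intervalIntegral

/-- The nonlocal derivative `D̄v` of a displacement `v`. -/
noncomputable def Dbar (K : ℝ × ℝ → ℝ) (lm lp cm cp : ℝ) (v : ℝ → ℝ) (x : ℝ) : ℝ :=
  cm * (∫ t in (x - lm)..x, K (x, t) * deriv v t) +
  cp * (∫ t in x..(x + lp), K (x, t) * deriv v t)

/-- The adjoint convolution operator `Ĩσ` of a stress field `σ`. -/
noncomputable def Itilde (K : ℝ × ℝ → ℝ) (lm lp cm cp : ℝ) (σ : ℝ → ℝ) (x : ℝ) : ℝ :=
  cm * (∫ s in x..(x + lm), K (s, x) * σ s) +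
  cp * (∫ s in (x - lp)..x, K (s, x) * σ s)

section Aux

/-- General Fubini-type swap lemma, covering both the left (`ε = true`) and right
(`ε = false`) nonlocal horizons simultaneously via the auxiliary set `S`. -/
lemma aux_swap (g : ℝ × ℝ → ℝ) (hg : Continuous g) (σ : ℝ → ℝ) (hσ : Continuous σ)
    (M : ℝ) (hσb : ∀ x, |σ x| ≤ M) (w : ℝ → ℝ) (hw : Continuous w)
    (hws : HasCompactSupport w) (l : ℝ) (hl : 0 < l) :
    Integrable (fun x => σ x * ∫ t in (x - l)..x, g (x, t) * w t) ∧
    Integrable (fun t => w t * ∫ s in t..(t + l), g (s, t) * σ s) ∧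
    (∫ x : ℝ, σ x * ∫ t in (x - l)..x, g (x, t) * w t) =
      ∫ t : ℝ, w t * ∫ s in t..(t + l), g (s, t) * σ s := by
  classical
  -- bound on the support of w
  obtain ⟨R, hRsupp⟩ := (hws.isBounded).subset_closedBall 0
  have hRw : ∀ t, w t ≠ 0 → |t| ≤ R := by
    intro t ht
    have : t ∈ tsupport w := subset_tsupport w ht
    have := hRsupp this
    simpa [Real.closedBall_eq_Icc, abs_le, Set.mem_Icc] using this
  -- the region of integration
  set S : Set (ℝ × ℝ) := {q | q.1 - l < q.2 ∧ q.2 ≤ q.1} with hS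
  have hSmeas : MeasurableSet S := by
    have h1 : MeasurableSet {q : ℝ × ℝ | q.1 - l < q.2} :=
      measurableSet_lt (measurable_fst.sub measurable_const) measurable_snd
    have h2 : MeasurableSet {q : ℝ × ℝ | q.2 ≤ q.1} :=
      measurableSet_le measurable_snd measurable_fst
    exact h1.inter h2
  set F : ℝ × ℝ → ℝ := S.indicator (fun q => σ q.1 * (g q * w q.2)) with hF
  have hcont : Continuous (fun q : ℝ × ℝ => σ q.1 * (g q * w q.2)) :=
    (hσ.comp continuous_fst).mul (hg.mul (hw.comp continuous_snd))
  have hFmeas : AEStronglyMeasurable F volume :=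
    (hcont.aestronglyMeasurable).indicator hSmeas
  -- the compact box containing the support of F
  set B : Set (ℝ × ℝ) := Set.Icc (-R) (R + l) ×ˢ Set.Icc (-R) R with hB
  have hBcomp : IsCompact B := isCompact_Icc.prod isCompact_Icc
  have hBmeas : MeasurableSet B := measurableSet_Icc.prod measurableSet_Icc
  obtain ⟨C₁, hC₁⟩ := hBcomp.exists_bound_of_continuousOn hg.continuousOn
  obtain ⟨C₂, hC₂⟩ := hws.exists_bound_of_continuous hw
  have hM0 : 0 ≤ M := le_trans (abs_nonneg _) (hσb 0)
  have hC₂0 : 0 ≤ C₂ := le_trans (norm_nonneg _) (hC₂ 0)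
  set C : ℝ := M * (max C₁ 0 * C₂) with hC
  have hC0 : 0 ≤ C := mul_nonneg hM0 (mul_nonneg (le_max_right _ _) hC₂0)
  -- F vanishes outside B
  have hFsupp : ∀ p, p ∉ B → F p = 0 := by
    intro p hp
    by_contra h
    apply hp
    have hpS : p ∈ S := by
      by_contra hpS
      rw [hF] at h
      exact h (Set.indicator_of_notMem hpS _)
    rw [hF, Set.indicator_of_mem hpS] at h
    have hwp : w p.2 ≠ 0 := by intro h0; apply h; rw [h0]; ring
    have h2 : |p.2| ≤ R := hRw _ hwp
    obtain ⟨hp1, hp2⟩ := hpS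
    constructor
    · constructor
      · have := (abs_le.1 h2).1; linarith
      · have := (abs_le.1 h2).2; linarith
    · exact abs_le.1 h2
  -- pointwise bound
  have hFle : ∀ p, ‖F p‖ ≤ B.indicator (fun _ => C) p := by
    intro p
    by_cases hp : p ∈ B
    · rw [Set.indicator_of_mem hp]
      refine le_trans (norm_indicator_le_norm_self _ p) ?_
      rw [norm_mul, norm_mul]
      have h1 : ‖σ p.1‖ ≤ M := by rw [Real.norm_eq_abs]; exact hσb _
      have h2 : ‖g p‖ ≤ max C₁ 0 := le_trans (hC₁ p hp) (le_max_left _ _)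
      have h3 : ‖w p.2‖ ≤ C₂ := hC₂ _
      exact mul_le_mul h1 (mul_le_mul h2 h3 (norm_nonneg _) (le_max_right _ _))
        (mul_nonneg (norm_nonneg _) (norm_nonneg _)) hM0
    · rw [Set.indicator_of_notMem hp, hFsupp p hp, norm_zero]
  have hBoundInt : Integrable (B.indicator (fun _ => C)) := by
    rw [integrable_indicator_iff hBmeas]
    exact integrableOn_const hBcomp.measure_lt_top.ne
  have hFint : Integrable F := Integrable.mono' hBoundInt hFmeas (ae_of_all _ hFle)
  -- pointwise identity for the left side
  have hL : ∀ x, σ x * ∫ t in (x - l)..x, g (x, t) * w t = ∫ t : ℝ, F (x, t) := by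
    intro x
    have h1 : (fun t => F (x, t)) =
        (Set.Ioc (x - l) x).indicator (fun t => σ x * (g (x, t) * w t)) := by
      funext t
      by_cases ht : t ∈ Set.Ioc (x - l) x
      · rw [Set.indicator_of_mem ht, hF, Set.indicator_of_mem]
        exact ⟨ht.1, ht.2⟩
      · rw [Set.indicator_of_notMem ht, hF, Set.indicator_of_notMem]
        intro hmem
        exact ht ⟨hmem.1, hmem.2⟩
    rw [h1, MeasureTheory.integral_indicator measurableSet_Ioc,
      intervalIntegral.integral_of_le (by linarith : x - l ≤ x), MeasureTheory.integral_const_mul]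
  -- pointwise identity for the right side
  have hR : ∀ t, (∫ x : ℝ, F (x, t)) = w t * ∫ s in t..(t + l), g (s, t) * σ s := by
    intro t
    have h1 : (fun x => F (x, t)) =
        (Set.Ico t (t + l)).indicator (fun x => σ x * (g (x, t) * w t)) := by
      funext x
      by_cases hx : x ∈ Set.Ico t (t + l)
      · rw [Set.indicator_of_mem hx, hF, Set.indicator_of_mem]
        exact ⟨by linarith [hx.2], hx.1⟩
      · rw [Set.indicator_of_notMem hx, hF, Set.indicator_of_notMem]
        intro hmem
        exact hx ⟨hmem.2, by obtain ⟨a, b⟩ := hmem; simp only at a; linarith⟩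
    rw [h1, MeasureTheory.integral_indicator measurableSet_Ico, integral_Ico_eq_integral_Ioo,
      ← integral_Ioc_eq_integral_Ioo,
      ← intervalIntegral.integral_of_le (by linarith : t ≤ t + l)]
    rw [show (fun s => σ s * (g (s, t) * w t)) = fun s => w t * (g (s, t) * σ s) by
      funext s; ring]
    rw [intervalIntegral.integral_const_mul]
  have hFprod : Integrable F (volume.prod volume) := by
    rwa [← Measure.volume_eq_prod]
  refine ⟨?_, ?_, ?_⟩
  · have : Integrable (fun x => ∫ t : ℝ, F (x, t)) := hFprod.integral_prod_left
    exact this.congr (ae_of_all _ fun x => (hL x).symm)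
  · have : Integrable (fun t => ∫ x : ℝ, F (x, t)) := hFprod.integral_prod_right
    exact this.congr (ae_of_all _ fun t => hR t)
  · calc (∫ x : ℝ, σ x * ∫ t in (x - l)..x, g (x, t) * w t)
        = ∫ x : ℝ, ∫ t : ℝ, F (x, t) := by
          exact integral_congr_ae (ae_of_all _ hL)
      _ = ∫ t : ℝ, ∫ x : ℝ, F (x, t) := integral_integral_swap hFprod
      _ = ∫ t : ℝ, w t * ∫ s in t..(t + l), g (s, t) * σ s :=
          integral_congr_ae (ae_of_all _ hR)

/-- Mirror version of `aux_swap` for the forward horizon. -/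
lemma aux_swap' (g : ℝ × ℝ → ℝ) (hg : Continuous g) (σ : ℝ → ℝ) (hσ : Continuous σ)
    (M : ℝ) (hσb : ∀ x, |σ x| ≤ M) (w : ℝ → ℝ) (hw : Continuous w)
    (hws : HasCompactSupport w) (l : ℝ) (hl : 0 < l) :
    Integrable (fun x => σ x * ∫ t in x..(x + l), g (x, t) * w t) ∧
    Integrable (fun t => w t * ∫ s in (t - l)..t, g (s, t) * σ s) ∧
    (∫ x : ℝ, σ x * ∫ t in x..(x + l), g (x, t) * w t) =
      ∫ t : ℝ, w t * ∫ s in (t - l)..t, g (s, t) * σ s := by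
  classical
  obtain ⟨R, hRsupp⟩ := (hws.isBounded).subset_closedBall 0
  have hRw : ∀ t, w t ≠ 0 → |t| ≤ R := by
    intro t ht
    have : t ∈ tsupport w := subset_tsupport w ht
    have := hRsupp this
    simpa [Real.closedBall_eq_Icc, abs_le, Set.mem_Icc] using this
  set S : Set (ℝ × ℝ) := {q | q.1 < q.2 ∧ q.2 ≤ q.1 + l} with hS
  have hSmeas : MeasurableSet S := by
    have h1 : MeasurableSet {q : ℝ × ℝ | q.1 < q.2} :=
      measurableSet_lt measurable_fst measurable_snd
    have h2 : MeasurableSet {q : ℝ × ℝ | q.2 ≤ q.1 + l} :=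
      measurableSet_le measurable_snd (measurable_fst.add measurable_const)
    exact h1.inter h2
  set F : ℝ × ℝ → ℝ := S.indicator (fun q => σ q.1 * (g q * w q.2)) with hF
  have hcont : Continuous (fun q : ℝ × ℝ => σ q.1 * (g q * w q.2)) :=
    (hσ.comp continuous_fst).mul (hg.mul (hw.comp continuous_snd))
  have hFmeas : AEStronglyMeasurable F volume :=
    (hcont.aestronglyMeasurable).indicator hSmeas
  set B : Set (ℝ × ℝ) := Set.Icc (-(R + l)) R ×ˢ Set.Icc (-R) R with hB
  have hBcomp : IsCompact B := isCompact_Icc.prod isCompact_Icc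
  have hBmeas : MeasurableSet B := measurableSet_Icc.prod measurableSet_Icc
  obtain ⟨C₁, hC₁⟩ := hBcomp.exists_bound_of_continuousOn hg.continuousOn
  obtain ⟨C₂, hC₂⟩ := hws.exists_bound_of_continuous hw
  have hM0 : 0 ≤ M := le_trans (abs_nonneg _) (hσb 0)
  have hC₂0 : 0 ≤ C₂ := le_trans (norm_nonneg _) (hC₂ 0)
  set C : ℝ := M * (max C₁ 0 * C₂) with hC
  have hFsupp : ∀ p, p ∉ B → F p = 0 := by
    intro p hp
    by_contra h
    apply hp
    have hpS : p ∈ S := by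
      by_contra hpS
      rw [hF] at h
      exact h (Set.indicator_of_notMem hpS _)
    rw [hF, Set.indicator_of_mem hpS] at h
    have hwp : w p.2 ≠ 0 := by intro h0; apply h; rw [h0]; ring
    have h2 : |p.2| ≤ R := hRw _ hwp
    obtain ⟨hp1, hp2⟩ := hpS
    constructor
    · constructor
      · have := (abs_le.1 h2).1; linarith
      · have := (abs_le.1 h2).2; linarith
    · exact abs_le.1 h2
  have hFle : ∀ p, ‖F p‖ ≤ B.indicator (fun _ => C) p := by
    intro p
    by_cases hp : p ∈ B
    · rw [Set.indicator_of_mem hp]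
      refine le_trans (norm_indicator_le_norm_self _ p) ?_
      rw [norm_mul, norm_mul]
      have h1 : ‖σ p.1‖ ≤ M := by rw [Real.norm_eq_abs]; exact hσb _
      have h2 : ‖g p‖ ≤ max C₁ 0 := le_trans (hC₁ p hp) (le_max_left _ _)
      have h3 : ‖w p.2‖ ≤ C₂ := hC₂ _
      exact mul_le_mul h1 (mul_le_mul h2 h3 (norm_nonneg _) (le_max_right _ _))
        (mul_nonneg (norm_nonneg _) (norm_nonneg _)) hM0
    · rw [Set.indicator_of_notMem hp, hFsupp p hp, norm_zero]
  have hBoundInt : Integrable (B.indicator (fun _ => C)) := by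
    rw [integrable_indicator_iff hBmeas]
    exact integrableOn_const hBcomp.measure_lt_top.ne
  have hFint : Integrable F := Integrable.mono' hBoundInt hFmeas (ae_of_all _ hFle)
  have hL : ∀ x, σ x * ∫ t in x..(x + l), g (x, t) * w t = ∫ t : ℝ, F (x, t) := by
    intro x
    have h1 : (fun t => F (x, t)) =
        (Set.Ioc x (x + l)).indicator (fun t => σ x * (g (x, t) * w t)) := by
      funext t
      by_cases ht : t ∈ Set.Ioc x (x + l)
      · rw [Set.indicator_of_mem ht, hF, Set.indicator_of_mem]
        exact ⟨ht.1, ht.2⟩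
      · rw [Set.indicator_of_notMem ht, hF, Set.indicator_of_notMem]
        intro hmem
        exact ht ⟨hmem.1, hmem.2⟩
    rw [h1, MeasureTheory.integral_indicator measurableSet_Ioc,
      intervalIntegral.integral_of_le (by linarith : x ≤ x + l), MeasureTheory.integral_const_mul]
  have hR : ∀ t, (∫ x : ℝ, F (x, t)) = w t * ∫ s in (t - l)..t, g (s, t) * σ s := by
    intro t
    have h1 : (fun x => F (x, t)) =
        (Set.Ico (t - l) t).indicator (fun x => σ x * (g (x, t) * w t)) := by
      funext x
      by_cases hx : x ∈ Set.Ico (t - l) t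
      · rw [Set.indicator_of_mem hx, hF, Set.indicator_of_mem]
        exact ⟨hx.2, by linarith [hx.1]⟩
      · rw [Set.indicator_of_notMem hx, hF, Set.indicator_of_notMem]
        intro hmem
        exact hx ⟨by obtain ⟨a, b⟩ := hmem; simp only at b; linarith, hmem.1⟩
    rw [h1, MeasureTheory.integral_indicator measurableSet_Ico, integral_Ico_eq_integral_Ioo,
      ← integral_Ioc_eq_integral_Ioo,
      ← intervalIntegral.integral_of_le (by linarith : t - l ≤ t)]
    rw [show (fun s => σ s * (g (s, t) * w t)) = fun s => w t * (g (s, t) * σ s) by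
      funext s; ring]
    rw [intervalIntegral.integral_const_mul]
  have hFprod : Integrable F (volume.prod volume) := by
    rwa [← Measure.volume_eq_prod]
  refine ⟨?_, ?_, ?_⟩
  · have : Integrable (fun x => ∫ t : ℝ, F (x, t)) := hFprod.integral_prod_left
    exact this.congr (ae_of_all _ fun x => (hL x).symm)
  · have : Integrable (fun t => ∫ x : ℝ, F (x, t)) := hFprod.integral_prod_right
    exact this.congr (ae_of_all _ fun t => hR t)
  · calc (∫ x : ℝ, σ x * ∫ t in x..(x + l), g (x, t) * w t)
        = ∫ x : ℝ, ∫ t : ℝ, F (x, t) := integral_congr_ae (ae_of_all _ hL)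
      _ = ∫ t : ℝ, ∫ x : ℝ, F (x, t) := integral_integral_swap hFprod
      _ = ∫ t : ℝ, w t * ∫ s in (t - l)..t, g (s, t) * σ s :=
          integral_congr_ae (ae_of_all _ hR)

end Aux

/-- the adjoint (integration-by-parts) identity underlying the nonlocal
governing equations: `∫ σ D̄v = ∫ (Ĩσ) v′ = −∫ (Ĩσ)′ v`. -/
theorem stmt_7 (K : ℝ × ℝ → ℝ) (hK : Continuous K) (lm lp : ℝ) (hlm : 0 < lm)
    (hlp : 0 < lp) (cm cp : ℝ) (σ : ℝ → ℝ) (hσ : Continuous σ)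
    (hσb : ∃ M : ℝ, ∀ x, |σ x| ≤ M)
    (v : ℝ → ℝ) (hv : ContDiff ℝ 1 v) (hvs : HasCompactSupport v)
    (hI : ContDiff ℝ 1 (Itilde K lm lp cm cp σ)) :
    (∫ x : ℝ, σ x * Dbar K lm lp cm cp v x) =
        (∫ x : ℝ, Itilde K lm lp cm cp σ x * deriv v x) ∧
    (∫ x : ℝ, Itilde K lm lp cm cp σ x * deriv v x) =
        -∫ x : ℝ, deriv (Itilde K lm lp cm cp σ) x * v x := by
  obtain ⟨M, hM⟩ := hσb
  have hw : Continuous (deriv v) := hv.continuous_deriv le_rfl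
  have hws : HasCompactSupport (deriv v) := hvs.deriv
  obtain ⟨h1L, h1R, h1⟩ := aux_swap K hK σ hσ M hM (deriv v) hw hws lm hlm
  obtain ⟨h2L, h2R, h2⟩ := aux_swap' K hK σ hσ M hM (deriv v) hw hws lp hlp
  constructor
  · calc (∫ x : ℝ, σ x * Dbar K lm lp cm cp v x)
        = ∫ x : ℝ, (cm * (σ x * ∫ t in (x - lm)..x, K (x, t) * deriv v t) +
            cp * (σ x * ∫ t in x..(x + lp), K (x, t) * deriv v t)) := by
          congr 1; funext x; unfold Dbar; ring
      _ = cm * (∫ x : ℝ, σ x * ∫ t in (x - lm)..x, K (x, t) * deriv v t) +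
          cp * (∫ x : ℝ, σ x * ∫ t in x..(x + lp), K (x, t) * deriv v t) := by
          rw [MeasureTheory.integral_add (h1L.const_mul cm) (h2L.const_mul cp),
            MeasureTheory.integral_const_mul, MeasureTheory.integral_const_mul]
      _ = cm * (∫ t : ℝ, deriv v t * ∫ s in t..(t + lm), K (s, t) * σ s) +
          cp * (∫ t : ℝ, deriv v t * ∫ s in (t - lp)..t, K (s, t) * σ s) := by
          rw [h1, h2]
      _ = ∫ x : ℝ, Itilde K lm lp cm cp σ x * deriv v x := by
          rw [← MeasureTheory.integral_const_mul, ← MeasureTheory.integral_const_mul,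
            ← MeasureTheory.integral_add (h1R.const_mul cm) (h2R.const_mul cp)]
          congr 1; funext x; unfold Itilde; ring
  · have hIc : Continuous (Itilde K lm lp cm cp σ) := hI.continuous
    have hIc' : Continuous (deriv (Itilde K lm lp cm cp σ)) := hI.continuous_deriv le_rfl
    have hvc : Continuous v := hv.continuous
    have hu : ∀ x, HasDerivAt (Itilde K lm lp cm cp σ)
        (deriv (Itilde K lm lp cm cp σ) x) x := fun x =>
      ((hI.differentiable one_ne_zero) x).hasDerivAt
    have hvd : ∀ x, HasDerivAt v (deriv v x) x := fun x =>
      ((hv.differentiable one_ne_zero) x).hasDerivAt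
    have huv' : Integrable (Itilde K lm lp cm cp σ * deriv v) :=
      (hIc.mul hw).integrable_of_hasCompactSupport hws.mul_left
    have hu'v : Integrable (deriv (Itilde K lm lp cm cp σ) * v) :=
      (hIc'.mul hvc).integrable_of_hasCompactSupport hvs.mul_left
    have huv : Integrable (Itilde K lm lp cm cp σ * v) :=
      (hIc.mul hvc).integrable_of_hasCompactSupport hvs.mul_left
    exact integral_mul_deriv_eq_deriv_mul_of_integrable (fun x _ => hu x) (fun x _ => hvd x) huv' hu'v huv
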